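/- If an (n−1)-CNF F in n variables (every clause of F omits at least one variable) has a resolution refutation of height h and length s in which every clause is non-tautological, then F has a resolution refutation of h levels of 3s clauses. -/

import Mathlib

abbrev Lit (n : ℕ) := Fin n × Bool
abbrev Clause (n : ℕ) := Finset (Lit n)
abbrev CNF (n : ℕ) := Finset (Clause n)

/-- A total assignment satisfies a literal. -/
def satLit {n : ℕ} (α : Fin n → Bool) (l : Lit n) : Prop := α l.1 = l.2

/-- A total assignment satisfies a clause if it satisfies some literal in it. -/
def satClause {n : ℕ} (α : Fin n → Bool) (C : Clause n) : Prop := ∃ l ∈ C, satLit α l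

/-- A total assignment satisfies a CNF if it satisfies all its clauses. -/
def satCNF {n : ℕ} (α : Fin n → Bool) (F : CNF n) : Prop := ∀ C ∈ F, satClause α C

/-- The resolventC of `C₁` and `C₂` on variable `x`: `(C₁ \ {x}) ∪ (C₂ \ {¬x})`. -/
def resolventC {n : ℕ} (C₁ C₂ : Clause n) (x : Fin n) : Clause n :=
  C₁.erase (x, true) ∪ C₂.erase (x, false)

/-- A resolution refutation of `F`: a nonempty sequence of clauses ending in the empty
clause, in which every clause is a weakening of a clause of `F` or a weakening of a
resolventC of two earlier clauses. -/
def IsRefutation {n : ℕ} (F : CNF n) (Prf : List (Clause n)) : Prop :=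
  Prf ≠ [] ∧ Prf.getLast? = some ∅ ∧
  ∀ u : Fin Prf.length,
    (∃ D ∈ F, D ⊆ Prf.get u) ∨
    ∃ v w : Fin Prf.length, v < u ∧ w < u ∧ ∃ x : Fin n,
      (x, true) ∈ Prf.get v ∧ (x, false) ∈ Prf.get w ∧
      resolventC (Prf.get v) (Prf.get w) x ⊆ Prf.get u

/-- Same as in stmt_3: a resolution refutation of `s` levels of `t` clauses. -/
def IsLevelledRefutation {n s t : ℕ} (F : CNF n) (C : Fin s → Fin t → Clause n) : Prop :=
  ∃ (hs : 0 < s) (ht : 0 < t),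
    (∀ j : Fin t, ∃ D ∈ F, D ⊆ C ⟨0, hs⟩ j) ∧
    (∀ (i : ℕ) (hi : i + 1 < s) (j : Fin t), ∃ (j₁ j₂ : Fin t) (x : Fin n),
      (x, true) ∈ C ⟨i, Nat.lt_of_succ_lt hi⟩ j₁ ∧
      (x, false) ∈ C ⟨i, Nat.lt_of_succ_lt hi⟩ j₂ ∧
      resolventC (C ⟨i, Nat.lt_of_succ_lt hi⟩ j₁) (C ⟨i, Nat.lt_of_succ_lt hi⟩ j₂) x
        ⊆ C ⟨i + 1, hi⟩ j) ∧
    C ⟨s - 1, Nat.sub_lt hs Nat.one_pos⟩ ⟨t - 1, Nat.sub_lt ht Nat.one_pos⟩ = ∅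

/-- `C_v` is a premise of a resolution rule by which `C_u` is obtained in `Prf`. -/
def premiseOf {n : ℕ} (Prf : List (Clause n)) (v u : Fin Prf.length) : Prop :=
  v < u ∧ ∃ w : Fin Prf.length, w < u ∧ ∃ x : Fin n,
    (((x, true) ∈ Prf.get v ∧ (x, false) ∈ Prf.get w ∧
        resolventC (Prf.get v) (Prf.get w) x ⊆ Prf.get u) ∨
     ((x, true) ∈ Prf.get w ∧ (x, false) ∈ Prf.get v ∧
        resolventC (Prf.get w) (Prf.get v) x ⊆ Prf.get u))

/-- The height of `Prf`: the supremum of the lengths of chains `u₁, …, u_h` in which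
each `C_{u_i}` is a premise of a resolution rule by which `C_{u_{i+1}}` is obtained. -/
noncomputable def refHeight {n : ℕ} (Prf : List (Clause n)) : ℕ :=
  sSup {h | ∃ L : List (Fin Prf.length), L.length = h ∧ L.Chain' (premiseOf Prf)}

/-- chains ending at u -/
def chainsTo {n : ℕ} (Prf : List (Clause n)) (u : Fin Prf.length) : Set ℕ :=
  {k | ∃ L : List (Fin Prf.length), L.length = k ∧ L.Chain' (premiseOf Prf) ∧ L.getLast? = some u}

noncomputable def htOf {n : ℕ} (Prf : List (Clause n)) (u : Fin Prf.length) : ℕ :=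
  sSup (chainsTo Prf u)

lemma chainLen_le {n : ℕ} {Prf : List (Clause n)} {L : List (Fin Prf.length)}
    (hc : L.Chain' (premiseOf Prf)) : L.length ≤ Prf.length := by
  have h1 : L.Chain' (· < ·) := hc.imp (fun a b hab => hab.1)
  have h2 : L.Pairwise (· < ·) := List.isChain_iff_pairwise.mp h1
  have h3 : L.Nodup := h2.imp (fun hab => ne_of_lt hab)
  simpa using h3.length_le_card

lemma chainsTo_bdd {n : ℕ} (Prf : List (Clause n)) (u : Fin Prf.length) :
    BddAbove (chainsTo Prf u) := by
  refine ⟨Prf.length, fun k hk => ?_⟩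
  obtain ⟨L, hL, hc, -⟩ := hk
  exact hL ▸ chainLen_le hc

lemma refHeight_bdd {n : ℕ} (Prf : List (Clause n)) :
    BddAbove {h | ∃ L : List (Fin Prf.length), L.length = h ∧ L.Chain' (premiseOf Prf)} := by
  refine ⟨Prf.length, fun k hk => ?_⟩
  obtain ⟨L, hL, hc⟩ := hk
  exact hL ▸ chainLen_le hc

lemma one_mem_chainsTo {n : ℕ} (Prf : List (Clause n)) (u : Fin Prf.length) :
    1 ∈ chainsTo Prf u :=
  ⟨[u], rfl, List.isChain_singleton u, rfl⟩

lemma one_le_htOf {n : ℕ} (Prf : List (Clause n)) (u : Fin Prf.length) :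
    1 ≤ htOf Prf u :=
  le_csSup (chainsTo_bdd Prf u) (one_mem_chainsTo Prf u)

lemma htOf_le_refHeight {n : ℕ} (Prf : List (Clause n)) (u : Fin Prf.length) :
    htOf Prf u ≤ refHeight Prf := by
  refine csSup_le ⟨1, one_mem_chainsTo Prf u⟩ (fun k hk => ?_)
  obtain ⟨L, h1, h2, -⟩ := hk
  exact le_csSup (refHeight_bdd Prf) ⟨L, h1, h2⟩

lemma premise_htOf_lt {n : ℕ} {Prf : List (Clause n)} {v u : Fin Prf.length}
    (hp : premiseOf Prf v u) : htOf Prf v < htOf Prf u := by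
  have hmem : htOf Prf v ∈ chainsTo Prf v :=
    Nat.sSup_mem ⟨1, one_mem_chainsTo Prf v⟩ (chainsTo_bdd Prf v)
  obtain ⟨L, hL, hc, hlast⟩ := hmem
  have hc' : (L ++ [u]).Chain' (premiseOf Prf) := by
    refine hc.append (List.isChain_singleton u) ?_
    intro x hx y hy
    simp only [hlast, Option.mem_def, Option.some.injEq] at hx
    simp only [List.head?_cons, Option.mem_def, Option.some.injEq] at hy
    subst hx; subst hy; exact hp
  have : htOf Prf v + 1 ≤ htOf Prf u := by
    refine le_csSup (chainsTo_bdd Prf u) ⟨L ++ [u], by simp [hL], hc', ?_⟩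
    simp
  omega

lemma chain_split {α : Type*} {R : α → α → Prop} {L : List α} {u : α}
    (hc : L.Chain' R) (hlen : 2 ≤ L.length) (hlast : L.getLast? = some u) :
    ∃ v : α, R v u := by
  obtain hnil | ⟨M, a, rfl⟩ := L.eq_nil_or_concat'
  · subst hnil; simp at hlen
  have ha : a = u := by simpa using hlast
  subst ha
  obtain hnil | ⟨M', b, rfl⟩ := M.eq_nil_or_concat'
  · subst hnil; simp at hlen
  obtain ⟨-, -, h3⟩ := List.isChain_append.mp hc
  exact ⟨b, h3 b (by simp) a (by simp)⟩

/-- resolution data for a clause of height ≥ 2 -/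
lemma htOf_two_resolution {n : ℕ} {Prf : List (Clause n)} {u : Fin Prf.length}
    (h2 : 2 ≤ htOf Prf u) :
    ∃ v w : Fin Prf.length, ∃ x : Fin n,
      htOf Prf v < htOf Prf u ∧ htOf Prf w < htOf Prf u ∧
      (x, true) ∈ Prf.get v ∧ (x, false) ∈ Prf.get w ∧
      resolventC (Prf.get v) (Prf.get w) x ⊆ Prf.get u := by
  have hmem : htOf Prf u ∈ chainsTo Prf u :=
    Nat.sSup_mem ⟨1, one_mem_chainsTo Prf u⟩ (chainsTo_bdd Prf u)
  obtain ⟨L, hL, hc, hlast⟩ := hmem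
  obtain ⟨p, hp⟩ := chain_split hc (by omega) hlast
  obtain ⟨hpu, w, hwu, x, hor⟩ := hp
  rcases hor with ⟨h1, h2', h3⟩ | ⟨h1, h2', h3⟩
  · exact ⟨p, w, x, premise_htOf_lt ⟨hpu, w, hwu, x, Or.inl ⟨h1, h2', h3⟩⟩,
      premise_htOf_lt ⟨hwu, p, hpu, x, Or.inr ⟨h1, h2', h3⟩⟩, h1, h2', h3⟩
  · exact ⟨w, p, x, premise_htOf_lt ⟨hwu, p, hpu, x, Or.inl ⟨h1, h2', h3⟩⟩,
      premise_htOf_lt ⟨hpu, w, hwu, x, Or.inr ⟨h1, h2', h3⟩⟩, h1, h2', h3⟩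

lemma exists_big_ht {n : ℕ} {Prf : List (Clause n)} (hH : 2 ≤ refHeight Prf) :
    ∃ u : Fin Prf.length, 2 ≤ htOf Prf u := by
  have hmem : refHeight Prf ∈
      {h | ∃ L : List (Fin Prf.length), L.length = h ∧ L.Chain' (premiseOf Prf)} :=
    Nat.sSup_mem ⟨0, [], rfl, List.isChain_nil⟩ (refHeight_bdd Prf)
  obtain ⟨L, hL, hc⟩ := hmem
  have hne : L ≠ [] := by intro h; subst h; simp at hL; omega
  refine ⟨L.getLast hne, ?_⟩
  refine le_trans ?_ (le_csSup (chainsTo_bdd _ _) ⟨L, rfl, hc, List.getLast?_eq_getLast_of_ne_nil hne⟩)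
  omega

noncomputable def pickF {n : ℕ} (Prf : List (Clause n)) (hs : 0 < Prf.length) (i : ℕ)
    (j : Fin (3 * Prf.length)) : Fin Prf.length :=
  if htOf Prf ⟨j.1 / 3, by have := j.isLt; omega⟩ ≤ i + 1
  then ⟨j.1 / 3, by have := j.isLt; omega⟩ else ⟨0, hs⟩

noncomputable def levC {n : ℕ} (Prf : List (Clause n)) (x₀ : Fin n) (hs : 0 < Prf.length)
    (i : ℕ) (j : Fin (3 * Prf.length)) : Clause n :=
  if j.1 % 3 = 0 then insert (x₀, true) (Prf.get (pickF Prf hs i j))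
  else if j.1 % 3 = 1 then insert (x₀, false) (Prf.get (pickF Prf hs i j))
  else Prf.get (pickF Prf hs i j)

lemma get_pickF_subset {n : ℕ} (Prf : List (Clause n)) (x₀ : Fin n) (hs : 0 < Prf.length)
    (i : ℕ) (j : Fin (3 * Prf.length)) :
    Prf.get (pickF Prf hs i j) ⊆ levC Prf x₀ hs i j := by
  unfold levC
  split_ifs <;> first | exact Finset.subset_insert _ _ | exact Finset.Subset.refl _

lemma pickF_val {n : ℕ} {Prf : List (Clause n)} (hs : 0 < Prf.length) (i : ℕ)
    {j : Fin (3 * Prf.length)} {a : Fin Prf.length} (h : j.1 / 3 = a.1) :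
    pickF Prf hs i j = if htOf Prf a ≤ i + 1 then a else ⟨0, hs⟩ := by
  unfold pickF
  have ha : (⟨j.1 / 3, by have := j.isLt; omega⟩ : Fin Prf.length) = a := Fin.ext h
  rw [ha]

lemma levC_mod0 {n : ℕ} {Prf : List (Clause n)} (x₀ : Fin n) (hs : 0 < Prf.length)
    (i : ℕ) {j : Fin (3 * Prf.length)} (h : j.1 % 3 = 0) :
    levC Prf x₀ hs i j = insert (x₀, true) (Prf.get (pickF Prf hs i j)) := by
  unfold levC; rw [if_pos h]

lemma levC_mod1 {n : ℕ} {Prf : List (Clause n)} (x₀ : Fin n) (hs : 0 < Prf.length)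
    (i : ℕ) {j : Fin (3 * Prf.length)} (h : j.1 % 3 = 1) :
    levC Prf x₀ hs i j = insert (x₀, false) (Prf.get (pickF Prf hs i j)) := by
  unfold levC; rw [if_neg (by omega), if_pos h]

lemma levC_mod2 {n : ℕ} {Prf : List (Clause n)} (x₀ : Fin n) (hs : 0 < Prf.length)
    (i : ℕ) {j : Fin (3 * Prf.length)} (h : j.1 % 3 = 2) :
    levC Prf x₀ hs i j = Prf.get (pickF Prf hs i j) := by
  unfold levC; rw [if_neg (by omega), if_neg (by omega)]

lemma resolvent_insert_subset {n : ℕ} (P : Clause n) (x : Fin n) :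
    resolventC (insert (x, true) P) (insert (x, false) P) x ⊆ P := by
  intro l hl
  simp only [resolventC, Finset.mem_union, Finset.mem_erase, Finset.mem_insert] at hl
  tauto

/-- If an `(n−1)`-CNF `F` in `n` variables has a resolution refutation of height `h`
and length `s` in which every clause is non-tautological, then `F` has a resolution
refutation of `h` levels of `3s` clauses. -/
theorem refutation_to_levelled {n h s : ℕ} (F : CNF n)
    (hF : ∀ C ∈ F, C.card ≤ n - 1)
    (Prf : List (Clause n)) (href : IsRefutation F Prf)
    (hheight : refHeight Prf = h) (hlen : Prf.length = s)
    (hnt : ∀ C ∈ Prf, ∀ x : Fin n, ¬((x, true) ∈ C ∧ (x, false) ∈ C)) :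
    ∃ C : Fin h → Fin (3 * s) → Clause n, IsLevelledRefutation F C := by
  obtain ⟨hne, hlast, hstep⟩ := href
  subst hheight hlen
  have hs : 0 < Prf.length := List.length_pos_iff.mpr hne
  have hH1 : 1 ≤ refHeight Prf :=
    le_trans (one_le_htOf Prf ⟨0, hs⟩) (htOf_le_refHeight Prf ⟨0, hs⟩)
  have hulast : Prf.get ⟨Prf.length - 1, Nat.sub_lt hs Nat.one_pos⟩ = ∅ := by
    rw [List.getLast?_eq_getLast_of_ne_nil hne, Option.some_inj] at hlast
    rw [← hlast, List.getLast_eq_getElem, List.get_eq_getElem]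
  have haxiom : ∀ u : Fin Prf.length, htOf Prf u ≤ 1 → ∃ D ∈ F, D ⊆ Prf.get u := by
    intro u hu
    rcases hstep u with hax | ⟨v, w, hv, hw, x, h1, h2, h3⟩
    · exact hax
    · exfalso
      have hlt := premise_htOf_lt ⟨hv, w, hw, x, Or.inl ⟨h1, h2, h3⟩⟩
      have h1v := one_le_htOf Prf v
      omega
  have hax0 : ∃ D ∈ F, D ⊆ Prf.get ⟨0, hs⟩ := by
    rcases hstep ⟨0, hs⟩ with hax | ⟨v, w, hv, hw, -⟩
    · exact hax
    · rw [Fin.lt_def] at hv; simp at hv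
  by_cases hH2 : refHeight Prf ≤ 1
  · -- height 1: all clauses of the refutation are axioms; ∅ ∈ F
    obtain ⟨D, hD, hDs⟩ := haxiom ⟨Prf.length - 1, Nat.sub_lt hs Nat.one_pos⟩
      (le_trans (htOf_le_refHeight Prf _) hH2)
    rw [hulast, Finset.subset_empty] at hDs
    subst hDs
    refine ⟨fun _ _ => ∅, by omega, by omega, ?_, ?_, rfl⟩
    · intro j; exact ⟨∅, hD, Finset.Subset.refl _⟩
    · intro i hi j; exfalso; omega
  · -- height ≥ 2: there is a resolution step, extract a variable x₀
    obtain ⟨ubig, hubig⟩ := exists_big_ht (Prf := Prf) (by omega)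
    obtain ⟨-, -, x₀, -⟩ := htOf_two_resolution hubig
    refine ⟨fun i j => levC Prf x₀ hs i.1 j, hH1, ?_, ?_, ?_, ?_⟩
    · omega
    · -- level 1: axioms
      intro j
      have haj : j.1 / 3 < Prf.length := by have := j.isLt; omega
      obtain ⟨D, hD, hDs⟩ : ∃ D ∈ F, D ⊆ Prf.get (pickF Prf hs 0 j) := by
        rw [pickF_val hs 0 (a := ⟨j.1 / 3, haj⟩) rfl]
        split_ifs with hc
        · exact haxiom _ hc
        · exact hax0
      exact ⟨D, hD, hDs.trans (get_pickF_subset Prf x₀ hs 0 j)⟩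
    · -- level transitions
      intro i hi j
      have haj : j.1 / 3 < Prf.length := by have := j.isLt; omega
      set a : Fin Prf.length := ⟨j.1 / 3, haj⟩ with ha_def
      by_cases hres : htOf Prf a = i + 2
      · -- real resolution step
        obtain ⟨v, w, x, hv, hw, h1, h2, h3⟩ := htOf_two_resolution (u := a) (by omega)
        have hb1 : 3 * v.1 + 2 < 3 * Prf.length := by have := v.isLt; omega
        have hb2 : 3 * w.1 + 2 < 3 * Prf.length := by have := w.isLt; omega
        refine ⟨⟨3 * v.1 + 2, hb1⟩, ⟨3 * w.1 + 2, hb2⟩, x, ?_, ?_, ?_⟩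
        · show (x, true) ∈ levC Prf x₀ hs i ⟨3 * v.1 + 2, hb1⟩
          rw [levC_mod2 x₀ hs _ (by first | (simp; omega) | simp | omega), pickF_val hs _ (a := v) (by first | (simp; omega) | simp | omega),
            if_pos (by omega)]
          exact h1
        · show (x, false) ∈ levC Prf x₀ hs i ⟨3 * w.1 + 2, hb2⟩
          rw [levC_mod2 x₀ hs _ (by first | (simp; omega) | simp | omega), pickF_val hs _ (a := w) (by first | (simp; omega) | simp | omega),
            if_pos (by omega)]
          exact h2
        · show resolventC (levC Prf x₀ hs i ⟨3 * v.1 + 2, hb1⟩)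
              (levC Prf x₀ hs i ⟨3 * w.1 + 2, hb2⟩) x ⊆ levC Prf x₀ hs (i + 1) j
          rw [levC_mod2 x₀ hs _ (by first | (simp; omega) | simp | omega), levC_mod2 x₀ hs _ (by first | (simp; omega) | simp | omega),
            pickF_val hs _ (a := v) (by first | (simp; omega) | simp | omega), pickF_val hs _ (a := w) (by first | (simp; omega) | simp | omega),
            if_pos (by omega), if_pos (by omega)]
          refine h3.trans (le_trans ?_ (get_pickF_subset Prf x₀ hs (i + 1) j))
          rw [pickF_val hs _ (a := a) rfl, if_pos (by omega)]
      · -- copy step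
        have hpp : pickF Prf hs i j = pickF Prf hs (i + 1) j := by
          rw [pickF_val hs _ (a := a) rfl, pickF_val hs _ (a := a) rfl]
          split_ifs with hc1 hc2 hc2
          · rfl
          · omega
          · omega
          · rfl
        have hb1 : 3 * (j.1 / 3) < 3 * Prf.length := by have := j.isLt; omega
        have hb2 : 3 * (j.1 / 3) + 1 < 3 * Prf.length := by have := j.isLt; omega
        refine ⟨⟨3 * (j.1 / 3), hb1⟩, ⟨3 * (j.1 / 3) + 1, hb2⟩, x₀, ?_, ?_, ?_⟩
        · show (x₀, true) ∈ levC Prf x₀ hs i ⟨3 * (j.1 / 3), hb1⟩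
          rw [levC_mod0 x₀ hs _ (by first | (simp; omega) | simp | omega)]
          exact Finset.mem_insert_self _ _
        · show (x₀, false) ∈ levC Prf x₀ hs i ⟨3 * (j.1 / 3) + 1, hb2⟩
          rw [levC_mod1 x₀ hs _ (by first | (simp; omega) | simp | omega)]
          exact Finset.mem_insert_self _ _
        · show resolventC (levC Prf x₀ hs i ⟨3 * (j.1 / 3), hb1⟩)
              (levC Prf x₀ hs i ⟨3 * (j.1 / 3) + 1, hb2⟩) x₀ ⊆ levC Prf x₀ hs (i + 1) j
          rw [levC_mod0 x₀ hs _ (by first | (simp; omega) | simp | omega), levC_mod1 x₀ hs _ (by first | (simp; omega) | simp | omega),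
            pickF_val hs _ (a := a) (by show 3 * (j.1 / 3) / 3 = j.1 / 3; omega), pickF_val hs _ (a := a) (by show (3 * (j.1 / 3) + 1) / 3 = j.1 / 3; omega)]
          refine le_trans ?_ (get_pickF_subset Prf x₀ hs (i + 1) j)
          rw [← hpp, pickF_val hs _ (a := a) rfl]
          exact resolvent_insert_subset _ _
    · -- final clause
      have hb : 3 * Prf.length - 1 < 3 * Prf.length := by omega
      show levC Prf x₀ hs (refHeight Prf - 1) ⟨3 * Prf.length - 1, hb⟩ = ∅
      have hm2 : (3 * Prf.length - 1) % 3 = 2 := by omega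
      rw [levC_mod2 x₀ hs _ hm2,
        pickF_val hs _ (a := ⟨Prf.length - 1, Nat.sub_lt hs Nat.one_pos⟩) (by first | (simp; omega) | simp | omega),
        if_pos (by have := htOf_le_refHeight Prf ⟨Prf.length - 1, Nat.sub_lt hs Nat.one_pos⟩; omega)]
      exact hulast
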